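/- Let p > 1 be a real number, let d be a positive integer, and let λ be a partition with r ≤ d parts. Then |Aut(λ)| · ∏_{i=1}^{λ_1} p^{λ'_{i+1}(d - λ'_i)} · binom_p(d - λ'_{i+1}, λ'_i - λ'_{i+1}) = p^{|λ| d} · ∏_{j=0}^{r-1} (1 - p^{-d+j}), where binom_p denotes the p-binomial coefficient. -/

import Mathlib

open Finset

noncomputable section

/-- A partition: a multiset of positive natural numbers. -/
def Ptn : Type := {s : Multiset ℕ // ∀ x ∈ s, 0 < x}

namespace Ptn

/-- `|λ|`, the size of the partition. -/
def size (l : Ptn) : ℕ := l.1.sum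
/-- `r(λ)`, the number of parts. -/
def numParts (l : Ptn) : ℕ := l.1.card
/-- `m_i(λ)`, the number of parts of size `i`. -/
def mult (l : Ptn) (i : ℕ) : ℕ := l.1.count i
/-- `λ'_i`, the number of parts of size at least `i` (the `i`-th column length). -/
def col (l : Ptn) (i : ℕ) : ℕ := (l.1.filter (fun x => i ≤ x)).card
/-- `λ_1`, the largest part. -/
def maxPart (l : Ptn) : ℕ := l.1.sup
/-- `∑_i (λ'_i)^2` (over `i ≥ 1`; the terms vanish for `i > |λ|`). -/
def sumColSq (l : Ptn) : ℕ := ∑ i ∈ Finset.Icc 1 l.size, (l.col i) ^ 2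
/-- `n(λ) = ∑_i C(λ'_i, 2)` (over `i ≥ 1`; the terms vanish for `i > |λ|`). -/
def nStat (l : Ptn) : ℕ := ∑ i ∈ Finset.Icc 1 l.size, Nat.choose (l.col i) 2

end Ptn

/-- `(x)_i = (1-x)(1-x/p)⋯(1-x/p^{i-1})`. -/
def poch (p x : ℝ) (i : ℕ) : ℝ := ∏ k ∈ Finset.range i, (1 - x / p ^ k)

/-- `|Aut(λ)| = p^{∑ (λ'_i)^2} ∏_i (1/p)_{m_i(λ)}`. -/
def autCard (p : ℝ) (l : Ptn) : ℝ :=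
  p ^ l.sumColSq * ∏ i ∈ Finset.Icc 1 l.size, poch p (1 / p) (l.mult i)

/-- The measure `P_{d,u}` on partitions. -/
def Pdu (p u : ℝ) (d : ℕ) (l : Ptn) : ℝ :=
  if l.numParts ≤ d then
    u ^ l.size / autCard p l
      * ∏ i ∈ Finset.Icc 1 d, (1 - u / p ^ i)
      * ∏ i ∈ Finset.Icc (d - l.numParts + 1) d, (1 - 1 / p ^ i)
  else 0

/-- `[n]_p = (p^n - 1)/(p - 1)`. -/
def qInt (p : ℝ) (n : ℕ) : ℝ := (p ^ n - 1) / (p - 1)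

/-- `[n]_p! = [n]_p [n-1]_p ⋯ [1]_p`. -/
def qFact (p : ℝ) (n : ℕ) : ℝ := ∏ k ∈ Finset.range n, qInt p (k + 1)

/-- The `p`-binomial coefficient `binom_p(n,j) = [n]_p! / ([j]_p! [n-j]_p!)`. -/
def qBinom (p : ℝ) (n j : ℕ) : ℝ := qFact p n / (qFact p j * qFact p (n - j))


/-- `g p n = ∏_{k=1}^n (1 - p^{-k})`. -/
def gp (p : ℝ) (n : ℕ) : ℝ := ∏ k ∈ Finset.range n, (1 - (p ^ (k + 1))⁻¹)

lemma gp_pos {p : ℝ} (hp : 1 < p) (n : ℕ) : 0 < gp p n := by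
  apply Finset.prod_pos
  intro k _
  have h1 : (1:ℝ) < p ^ (k+1) := one_lt_pow₀ hp (Nat.succ_ne_zero k)
  have : (p ^ (k+1))⁻¹ < 1 := inv_lt_one_of_one_lt₀ h1
  linarith

lemma gp_ne_zero {p : ℝ} (hp : 1 < p) (n : ℕ) : gp p n ≠ 0 := (gp_pos hp n).ne'

lemma gp_succ (p : ℝ) (n : ℕ) : gp p (n+1) = gp p n * (1 - (p ^ (n+1))⁻¹) :=
  Finset.prod_range_succ _ _


lemma poch_eq_gp {p : ℝ} (hp : 1 < p) (m : ℕ) : poch p (1/p) m = gp p m := by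
  have hp0 : p ≠ 0 := by positivity
  unfold poch gp
  apply Finset.prod_congr rfl
  intro k _
  congr 1
  rw [div_div, one_div, ← pow_succ']

/-- triangular-number sums -/
def Tn (n : ℕ) : ℕ := ∑ k ∈ Finset.range n, (k + 1)

lemma Tn_add (j m : ℕ) : Tn (j + m) = Tn j + Tn m + j * m := by
  induction m with
  | zero => simp [Tn]
  | succ m ih =>
    have h1 : j + (m+1) = (j + m) + 1 := by omega
    rw [h1, Tn, Finset.sum_range_succ, ← Tn, ih]
    simp only [Tn, Finset.sum_range_succ]
    ring

lemma qFact_eq {p : ℝ} (hp : 1 < p) (n : ℕ) :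
    qFact p n * (p - 1) ^ n = p ^ Tn n * gp p n := by
  have hp0 : p ≠ 0 := by positivity
  have hp1 : p - 1 ≠ 0 := by intro h; nlinarith [hp]
  induction n with
  | zero => simp [qFact, Tn, gp]
  | succ n ih =>
    rw [qFact, Finset.prod_range_succ, ← qFact, gp_succ, Tn, Finset.sum_range_succ, ← Tn]
    have hpow : (p:ℝ) ^ (n+1) ≠ 0 := by positivity
    have hq : qInt p (n+1) * (p - 1) = p ^ (n+1) * (1 - (p ^ (n+1))⁻¹) := by
      unfold qInt
      field_simp
    calc qFact p n * qInt p (n+1) * (p-1)^(n+1)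
        = (qFact p n * (p-1)^n) * (qInt p (n+1) * (p-1)) := by ring
      _ = p ^ Tn n * gp p n * (p ^ (n+1) * (1 - (p ^ (n+1))⁻¹)) := by rw [ih, hq]
      _ = p ^ (Tn n + (n+1)) * (gp p n * (1 - (p ^ (n+1))⁻¹)) := by rw [pow_add]; ring

lemma qBinom_eq {p : ℝ} (hp : 1 < p) {n j : ℕ} (hj : j ≤ n) :
    qBinom p n j = p ^ (j * (n - j)) * gp p n / (gp p j * gp p (n - j)) := by
  have hp0 : p ≠ 0 := by positivity
  have hp1 : p - 1 ≠ 0 := by intro h; nlinarith [hp]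
  obtain ⟨m, rfl⟩ := Nat.exists_eq_add_of_le hj
  have hnj : j + m - j = m := by omega
  have h1 := qFact_eq hp (j + m)
  have h2 := qFact_eq hp j
  have h3 := qFact_eq hp m
  have hT : Tn (j + m) = Tn j + Tn m + j * m := Tn_add j m
  rw [qBinom, hnj]
  have hgj := gp_ne_zero hp j
  have hgm := gp_ne_zero hp m
  have hgjm := gp_ne_zero hp (j + m)
  have hq2 : qFact p j = p ^ Tn j * gp p j / (p-1)^j := by
    field_simp at h2 ⊢; linarith [h2]
  have hq3 : qFact p m = p ^ Tn m * gp p m / (p-1)^m := by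
    field_simp at h3 ⊢; linarith [h3]
  have hq1 : qFact p (j+m) = p ^ Tn (j+m) * gp p (j+m) / (p-1)^(j+m) := by
    field_simp at h1 ⊢; linarith [h1]
  rw [hq1, hq2, hq3, hT]
  rw [pow_add, pow_add, pow_add]
  field_simp

lemma col_chain_le {c : ℕ → ℕ} (hc : ∀ i, c (i+1) ≤ c i) : ∀ i, c (i+1) ≤ c 1 := by
  intro i
  induction i with
  | zero => exact le_refl _
  | succ i ih => exact le_trans (hc (i+1)) ih

lemma exp_id {a b d : ℕ} (hba : b ≤ a) (had : a ≤ d) :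
    a ^ 2 + (b * (d - a) + (a - b) * (d - a)) = a * d := by
  obtain ⟨f, rfl⟩ := Nat.exists_eq_add_of_le hba
  obtain ⟨e, rfl⟩ := Nat.exists_eq_add_of_le had
  simp [Nat.add_sub_cancel_left]
  ring

lemma keyA (p : ℝ) (hp : 1 < p) (d : ℕ) (c : ℕ → ℕ) (hc : ∀ i, c (i+1) ≤ c i)
    (hcd : c 1 ≤ d) (n : ℕ) :
    (p ^ (∑ i ∈ Icc 1 n, (c i)^2) * ∏ i ∈ Icc 1 n, gp p (c i - c (i+1))) *
      (∏ i ∈ Icc 1 n, p ^ (c (i+1) * (d - c i)) * qBinom p (d - c (i+1)) (c i - c (i+1))) *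
      gp p (d - c 1)
    = p ^ ((∑ i ∈ Icc 1 n, c i) * d) * gp p (d - c (n+1)) := by
  induction n with
  | zero => simp
  | succ n ih =>
    have h1 : (1:ℕ) ≤ n + 1 := by omega
    rw [Finset.sum_Icc_succ_top h1, Finset.prod_Icc_succ_top h1, Finset.prod_Icc_succ_top h1]
    set a := c (n+1) with ha
    set b := c (n+2) with hb
    have hba : b ≤ a := hc (n+1)
    have had : a ≤ d := by
      rcases Nat.eq_zero_or_pos n with h | h
      · subst h; exact hcd
      · exact le_trans (col_chain_le hc n) hcd
    -- rewrite qBinom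
    have hj : a - b ≤ d - b := by omega
    have hsub : d - b - (a - b) = d - a := by omega
    have hqb : qBinom p (d - b) (a - b)
        = p ^ ((a-b) * (d - a)) * gp p (d - b) / (gp p (a-b) * gp p (d - a)) := by
      rw [qBinom_eq hp hj, hsub]
    have hga := gp_ne_zero hp (d - a)
    have hgab := gp_ne_zero hp (a - b)
    -- exponent identity
    have hexp : (a^2 + (b * (d - a) + (a-b) * (d-a))) = a * d := exp_id hba had
    calc p ^ (∑ i ∈ Icc 1 n, c i ^ 2 + a ^ 2) *
          ((∏ i ∈ Icc 1 n, gp p (c i - c (i+1))) * gp p (a - b)) *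
          ((∏ i ∈ Icc 1 n, p ^ (c (i+1) * (d - c i)) * qBinom p (d - c (i+1)) (c i - c (i+1))) *
            (p ^ (b * (d - a)) * qBinom p (d - b) (a - b))) * gp p (d - c 1)
        = ((p ^ (∑ i ∈ Icc 1 n, (c i)^2) * ∏ i ∈ Icc 1 n, gp p (c i - c (i+1))) *
            (∏ i ∈ Icc 1 n, p ^ (c (i+1) * (d - c i)) * qBinom p (d - c (i+1)) (c i - c (i+1))) *
            gp p (d - c 1)) *
          (p ^ (a^2) * gp p (a - b) * (p ^ (b * (d - a)) * qBinom p (d - b) (a - b))) := by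
          rw [pow_add]; ring
      _ = p ^ ((∑ i ∈ Icc 1 n, c i) * d) * gp p (d - a) *
          (p ^ (a^2) * gp p (a - b) * (p ^ (b * (d - a)) *
            (p ^ ((a-b) * (d - a)) * gp p (d - b) / (gp p (a-b) * gp p (d - a))))) := by
          rw [ih, hqb]
      _ = p ^ ((∑ i ∈ Icc 1 n, c i) * d) * (p ^ (a^2) * (p ^ (b * (d-a)) * p ^ ((a-b)*(d-a)))) *
            gp p (d - b) := by field_simp
      _ = p ^ ((∑ i ∈ Icc 1 n, c i) * d + a * d) * gp p (d - b) := by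
          rw [← pow_add, ← pow_add, ← pow_add, hexp]
      _ = p ^ ((∑ i ∈ Icc 1 n, c i + a) * d) * gp p (d - b) := by rw [Nat.add_mul]
      _ = p ^ ((∑ i ∈ Icc 1 (n+1), c i) * d) * gp p (d - b) := by
          rw [Finset.sum_Icc_succ_top h1]

lemma gdiv {p : ℝ} (hp : 1 < p) {r d : ℕ} (hr : r ≤ d) :
    gp p d = gp p (d - r) * ∏ j ∈ Finset.range r, (1 - p ^ (-(d:ℤ) + (j:ℤ))) := by
  induction r with
  | zero => simp
  | succ r ih =>
    have hr' : r ≤ d := by omega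
    rw [ih hr', Finset.prod_range_succ]
    have h1 : d - r = (d - (r+1)) + 1 := by omega
    rw [h1, gp_succ]
    have h2 : (p:ℝ) ^ (-(d:ℤ) + (r:ℤ)) = (p ^ (d - (r+1) + 1))⁻¹ := by
      have h3 : (-(d:ℤ) + (r:ℤ)) = -((d - (r+1) + 1 : ℕ) : ℤ) := by push_cast; omega
      rw [h3, zpow_neg, zpow_natCast]
    rw [h2]
    ring

lemma col_anti (l : Ptn) (i : ℕ) : l.col (i+1) ≤ l.col i :=
  Multiset.card_le_card (Multiset.monotone_filter_right l.1 (fun x h => by omega))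

lemma col_one (l : Ptn) : l.col 1 = l.numParts := by
  unfold Ptn.col Ptn.numParts
  congr 1
  rw [Multiset.filter_eq_self]
  intro x hx
  exact l.2 x hx

lemma col_eq_zero {l : Ptn} {i : ℕ} (h : l.maxPart < i) : l.col i = 0 := by
  unfold Ptn.col
  rw [Multiset.card_eq_zero, Multiset.filter_eq_nil]
  intro x hx hix
  have hs : x ≤ l.1.sup := Multiset.le_sup hx
  have hm : l.1.sup < i := h
  omega

lemma mult_eq (l : Ptn) (i : ℕ) : l.mult i = l.col i - l.col (i+1) := by
  unfold Ptn.mult Ptn.col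
  rw [← Multiset.countP_eq_card_filter, ← Multiset.countP_eq_card_filter]
  have key : ∀ s : Multiset ℕ, Multiset.countP (fun x => i ≤ x) s
      = Multiset.count i s + Multiset.countP (fun x => i + 1 ≤ x) s := by
    intro s
    induction s using Multiset.induction_on with
    | empty => simp
    | cons a t ih =>
      simp only [Multiset.countP_cons, Multiset.count_cons, ih]
      split_ifs <;> omega
  rw [key]
  omega

lemma maxPart_le_size (l : Ptn) : l.maxPart ≤ l.size := by
  apply Multiset.sup_le.mpr
  intro x hx
  exact Multiset.le_sum_of_mem hx

lemma size_eq_sum_col (l : Ptn) : l.size = ∑ i ∈ Finset.Icc 1 l.maxPart, l.col i := by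
  unfold Ptn.size Ptn.col Ptn.maxPart
  have key : ∀ s : Multiset ℕ, ∀ N : ℕ, (∀ x ∈ s, x ≤ N) →
      s.sum = ∑ i ∈ Finset.Icc 1 N, (s.filter (fun x => i ≤ x)).card := by
    intro s
    induction s using Multiset.induction_on with
    | empty => simp
    | cons a t ih =>
      intro N hN
      have ha : a ≤ N := hN a (Multiset.mem_cons_self a t)
      have hcard : ∀ i : ℕ, ((a ::ₘ t).filter (fun x => i ≤ x)).card
          = (if i ≤ a then 1 else 0) + (t.filter (fun x => i ≤ x)).card := by
        intro i
        rw [Multiset.filter_cons]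
        split_ifs <;> simp [Nat.add_comm]
      simp only [Multiset.sum_cons, hcard]
      rw [Finset.sum_add_distrib, ih N (fun x hx => hN x (Multiset.mem_cons_of_mem hx))]
      have hfil : (Finset.Icc 1 N).filter (fun i => i ≤ a) = Finset.Icc 1 a := by
        ext i
        simp only [Finset.mem_filter, Finset.mem_Icc]
        omega
      have hsum : (∑ i ∈ Finset.Icc 1 N, if i ≤ a then 1 else 0) = a := by
        rw [Finset.sum_ite, Finset.sum_const, Finset.sum_const, hfil]
        simp
      omega
  exact key l.1 l.1.sup (fun x hx => Multiset.le_sup hx)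

/-- Equation (8) of the paper.
`|Aut(λ)| · ∏_{i=1}^{λ_1} p^{λ'_{i+1}(d-λ'_i)} binom_p(d-λ'_{i+1}, λ'_i-λ'_{i+1})
  = p^{|λ|d} ∏_{j=0}^{r-1} (1 - p^{-d+j})`. -/
theorem aut_identity (p : ℝ) (hp : 1 < p) (d : ℕ) (hd : 0 < d)
    (l : Ptn) (hl : l.numParts ≤ d) :
    autCard p l *
      ∏ i ∈ Finset.Icc 1 l.maxPart,
        p ^ (l.col (i + 1) * (d - l.col i)) *
          qBinom p (d - l.col (i + 1)) (l.col i - l.col (i + 1))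
    = p ^ (l.size * d) *
        ∏ j ∈ Finset.range l.numParts, (1 - p ^ (-(d : ℤ) + (j : ℤ))) := by
  have hc1 : l.col 1 = l.numParts := col_one l
  have hcd : l.col 1 ≤ d := by rw [hc1]; exact hl
  have hcol0 : l.col (l.maxPart + 1) = 0 := col_eq_zero (by omega)
  have hMs := maxPart_le_size l
  have hsq : l.sumColSq = ∑ i ∈ Finset.Icc 1 l.maxPart, (l.col i)^2 := by
    unfold Ptn.sumColSq
    symm
    apply Finset.sum_subset
    · intro i hi
      simp only [Finset.mem_Icc] at *
      exact ⟨hi.1, le_trans hi.2 hMs⟩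
    · intro i hi hni
      simp only [Finset.mem_Icc] at hi hni
      have : l.col i = 0 := col_eq_zero (by omega)
      simp [this]
  have hmultprod : (∏ i ∈ Finset.Icc 1 l.size, poch p (1/p) (l.mult i))
      = ∏ i ∈ Finset.Icc 1 l.maxPart, gp p (l.col i - l.col (i+1)) := by
    calc (∏ i ∈ Finset.Icc 1 l.size, poch p (1/p) (l.mult i))
        = ∏ i ∈ Finset.Icc 1 l.size, gp p (l.col i - l.col (i+1)) := by
          refine Finset.prod_congr rfl (fun i _ => ?_)
          rw [poch_eq_gp hp, mult_eq]
      _ = ∏ i ∈ Finset.Icc 1 l.maxPart, gp p (l.col i - l.col (i+1)) := by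
          symm
          apply Finset.prod_subset
          · intro i hi
            simp only [Finset.mem_Icc] at *
            exact ⟨hi.1, le_trans hi.2 hMs⟩
          · intro i hi hni
            simp only [Finset.mem_Icc] at hi hni
            have h1 : l.col i = 0 := col_eq_zero (by omega)
            simp [h1, gp]
  have hkey := keyA p hp d l.col (col_anti l) hcd l.maxPart
  rw [hcol0, Nat.sub_zero] at hkey
  have hsize : l.size = ∑ i ∈ Finset.Icc 1 l.maxPart, l.col i := size_eq_sum_col l
  have hg := gp_ne_zero hp (d - l.numParts)
  apply mul_right_cancel₀ hg
  calc autCard p l *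
        (∏ i ∈ Finset.Icc 1 l.maxPart,
          p ^ (l.col (i + 1) * (d - l.col i)) *
            qBinom p (d - l.col (i + 1)) (l.col i - l.col (i + 1))) *
        gp p (d - l.numParts)
      = (p ^ (∑ i ∈ Finset.Icc 1 l.maxPart, (l.col i)^2) *
          ∏ i ∈ Finset.Icc 1 l.maxPart, gp p (l.col i - l.col (i+1))) *
        (∏ i ∈ Finset.Icc 1 l.maxPart,
          p ^ (l.col (i + 1) * (d - l.col i)) *
            qBinom p (d - l.col (i + 1)) (l.col i - l.col (i + 1))) *
        gp p (d - l.col 1) := by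
        rw [autCard, hsq, hmultprod, hc1]
    _ = p ^ ((∑ i ∈ Finset.Icc 1 l.maxPart, l.col i) * d) * gp p d := hkey
    _ = p ^ (l.size * d) * gp p d := by rw [← hsize]
    _ = p ^ (l.size * d) *
        (gp p (d - l.numParts) * ∏ j ∈ Finset.range l.numParts, (1 - p ^ (-(d:ℤ) + (j:ℤ)))) := by
        rw [← gdiv hp hl]
    _ = p ^ (l.size * d) *
        (∏ j ∈ Finset.range l.numParts, (1 - p ^ (-(d:ℤ) + (j:ℤ)))) * gp p (d - l.numParts) := by
        ring
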